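/- (Discrete-time G+D interlaced estimator, Proposition 2.) Let q be a positive integer, θ ∈ ℝ^q, φ : ℕ → ℝ^q a bounded sequence, y(k) = φ(k)ᵀθ, γ > 0 a constant and γ_g : ℕ → ℝ with γ_g(k) > 0 for all k. Define A(k) := I_q − φ(k)φ(k)ᵀ/(γ_g(k) + |φ(k)|²) and the recursions θ̂_g(k+1) = θ̂_g(k) + φ(k)(y(k) − φ(k)ᵀθ̂_g(k))/(γ_g(k) + |φ(k)|²) with θ̂_g(0) = θ_{g0} ∈ ℝ^q; Φ(k+1) = A(k)Φ(k) with Φ(0) = I_q; 𝒟(k) := I_q − Φ(k); Δ(k) := det 𝒟(k); Y(k) := adj(𝒟(k))·(θ̂_g(k) − Φ(k)θ_{g0}); and θ̂(k+1) = θ̂(k) + Δ(k)(Y(k) − Δ(k)θ̂(k))/(γ + Δ(k)²) with θ̂(0) = θ₀ ∈ ℝ^q. If φ is interval excited, then θ̂(k) converges to θ exponentially fast, i.e., there exist M ≥ 0 and λ ∈ (0,1) such that |θ̂(k) − θ| ≤ M·λ^k for all k ∈ ℕ. -/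

import Mathlib

open Matrix

section auxGD

lemma auxGD_dp_self_nonneg {n : Type*} [Fintype n] (v : n → ℝ) : 0 ≤ v ⬝ᵥ v :=
  Finset.sum_nonneg fun _ _ => mul_self_nonneg _

lemma auxGD_cs {n : Type*} [Fintype n] (u v : n → ℝ) :
    (u ⬝ᵥ v) ^ 2 ≤ (u ⬝ᵥ u) * (v ⬝ᵥ v) := by
  simpa [dotProduct, sq] using Finset.sum_mul_sq_le_sq_mul_sq Finset.univ u v

lemma auxGD_dp_le_sqrt {n : Type*} [Fintype n] (u v : n → ℝ) :
    u ⬝ᵥ v ≤ Real.sqrt (u ⬝ᵥ u) * Real.sqrt (v ⬝ᵥ v) := by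
  have habs : |u ⬝ᵥ v| ≤ Real.sqrt (u ⬝ᵥ u) * Real.sqrt (v ⬝ᵥ v) := by
    rw [← Real.sqrt_sq_eq_abs, ← Real.sqrt_mul (auxGD_dp_self_nonneg u)]
    exact Real.sqrt_le_sqrt (auxGD_cs u v)
  exact le_trans (le_abs_self _) habs

lemma auxGD_tri {n : Type*} [Fintype n] (u v : n → ℝ) :
    Real.sqrt ((u + v) ⬝ᵥ (u + v)) ≤ Real.sqrt (u ⬝ᵥ u) + Real.sqrt (v ⬝ᵥ v) := by
  have h1 := Real.sq_sqrt (auxGD_dp_self_nonneg u)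
  have h2 := Real.sq_sqrt (auxGD_dp_self_nonneg v)
  have h3 := auxGD_dp_le_sqrt u v
  have key : (u + v) ⬝ᵥ (u + v) ≤ (Real.sqrt (u ⬝ᵥ u) + Real.sqrt (v ⬝ᵥ v)) ^ 2 := by
    have hexp : (u + v) ⬝ᵥ (u + v) = u ⬝ᵥ u + 2 * (u ⬝ᵥ v) + v ⬝ᵥ v := by
      simp [add_dotProduct, dotProduct_add, dotProduct_comm v u]; ring
    nlinarith
  calc Real.sqrt ((u + v) ⬝ᵥ (u + v))
      ≤ Real.sqrt ((Real.sqrt (u ⬝ᵥ u) + Real.sqrt (v ⬝ᵥ v)) ^ 2) := Real.sqrt_le_sqrt key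
    _ = Real.sqrt (u ⬝ᵥ u) + Real.sqrt (v ⬝ᵥ v) := Real.sqrt_sq (by positivity)

lemma auxGD_tri_sum {n : Type*} [Fintype n] (m : ℕ) (w : ℕ → n → ℝ) :
    Real.sqrt ((∑ i ∈ Finset.range m, w i) ⬝ᵥ (∑ i ∈ Finset.range m, w i))
      ≤ ∑ i ∈ Finset.range m, Real.sqrt (w i ⬝ᵥ w i) := by
  induction m with
  | zero => simp
  | succ m ih =>
      rw [Finset.sum_range_succ, Finset.sum_range_succ]
      exact le_trans (auxGD_tri _ _) (by linarith)

lemma auxGD_vmv {n : Type*} [Fintype n] (u v w : n → ℝ) :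
    (Matrix.vecMulVec u v) *ᵥ w = (v ⬝ᵥ w) • u := by
  funext i
  simp only [Matrix.mulVec, Matrix.vecMulVec_apply, dotProduct, Pi.smul_apply, smul_eq_mul,
    Finset.sum_mul]
  exact Finset.sum_congr rfl fun j _ => by ring

lemma auxGD_det_ge {q : ℕ} (M : Matrix (Fin q) (Fin q) ℝ) (hM : M.IsHermitian) (c : ℝ)
    (hc : 0 ≤ c) (h : ∀ x : Fin q → ℝ, c * (x ⬝ᵥ x) ≤ x ⬝ᵥ (M *ᵥ x)) : c ^ q ≤ M.det := by
  have heig : ∀ i, c ≤ hM.eigenvalues i := by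
    intro i
    have hv := hM.eigenvalues_eq i
    set v : Fin q → ℝ := ⇑(hM.eigenvectorBasis i) with hvdef
    have hvv : v ⬝ᵥ v = 1 := by
      have h1 : ‖hM.eigenvectorBasis i‖ = 1 := hM.eigenvectorBasis.orthonormal.1 i
      have h2 : ‖hM.eigenvectorBasis i‖ ^ 2 = v ⬝ᵥ v := by
        rw [EuclideanSpace.norm_eq, Real.sq_sqrt (by positivity)]
        simp only [dotProduct, sq, Real.norm_eq_abs, abs_mul_abs_self]
        exact Finset.sum_congr rfl fun j _ => rfl
      rw [h1] at h2
      simpa using h2.symm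
    have hv' : hM.eigenvalues i = v ⬝ᵥ (M *ᵥ v) := by
      simpa [star_trivial] using hv
    have := h v
    rw [hvv] at this
    rw [hv']
    linarith
  have hdet : M.det = ∏ i, hM.eigenvalues i := by
    simpa using hM.det_eq_prod_eigenvalues
  rw [hdet]
  calc c ^ q = ∏ _i : Fin q, c := by simp
    _ ≤ ∏ i, hM.eigenvalues i :=
        Finset.prod_le_prod (fun _ _ => hc) (fun i _ => heig i)

lemma auxGD_sum_mulVec {n : Type*} [Fintype n] {ι : Type*} (s : Finset ι)
    (M : ι → Matrix n n ℝ) (x : n → ℝ) :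
    (∑ i ∈ s, M i) *ᵥ x = ∑ i ∈ s, M i *ᵥ x := by
  induction s using Finset.cons_induction with
  | empty => simp
  | cons i s hi ih => simp [Finset.sum_cons, Matrix.add_mulVec, ih]

lemma auxGD_dp_sum {n : Type*} [Fintype n] {ι : Type*} (s : Finset ι)
    (w : ι → n → ℝ) (x : n → ℝ) :
    x ⬝ᵥ (∑ i ∈ s, w i) = ∑ i ∈ s, x ⬝ᵥ w i := by
  induction s using Finset.cons_induction with
  | empty => simp
  | cons i s hi ih => simp [Finset.sum_cons, dotProduct_add, ih]

end auxGD

set_option maxHeartbeats 1600000 in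
/-- Proposition 2 (discrete time): the G+D interlaced estimator converges
exponentially under interval excitation. -/
theorem gd_interlaced_estimator_discrete
    (q : ℕ) (hq : 0 < q) (θ : Fin q → ℝ) (φ : ℕ → Fin q → ℝ)
    (hφbdd : ∃ B : ℝ, ∀ k, Real.sqrt (φ k ⬝ᵥ φ k) ≤ B)
    (y : ℕ → ℝ) (hy : ∀ k, y k = φ k ⬝ᵥ θ)
    (γ : ℝ) (hγ : 0 < γ) (γg : ℕ → ℝ) (hγg : ∀ k, 0 < γg k)
    (A : ℕ → Matrix (Fin q) (Fin q) ℝ)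
    (hA : ∀ k, A k = 1 - (γg k + φ k ⬝ᵥ φ k)⁻¹ • Matrix.vecMulVec (φ k) (φ k))
    (θg : ℕ → Fin q → ℝ) (θg0 : Fin q → ℝ) (hθg0 : θg 0 = θg0)
    (hθg : ∀ k, θg (k + 1) = θg k + ((y k - φ k ⬝ᵥ θg k) / (γg k + φ k ⬝ᵥ φ k)) • φ k)
    (Φ : ℕ → Matrix (Fin q) (Fin q) ℝ) (hΦ0 : Φ 0 = 1)
    (hΦ : ∀ k, Φ (k + 1) = A k * Φ k)
    (D : ℕ → Matrix (Fin q) (Fin q) ℝ) (hD : ∀ k, D k = 1 - Φ k)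
    (Δ : ℕ → ℝ) (hΔ : ∀ k, Δ k = (D k).det)
    (Y : ℕ → Fin q → ℝ) (hY : ∀ k, Y k = (D k).adjugate.mulVec (θg k - (Φ k).mulVec θg0))
    (θhat : ℕ → Fin q → ℝ) (θ0 : Fin q → ℝ) (hθhat0 : θhat 0 = θ0)
    (hθhat : ∀ k, θhat (k + 1)
      = θhat k + (Δ k / (γ + (Δ k) ^ 2)) • (Y k - Δ k • θhat k))
    -- interval excitation of φ
    (hIE : ∃ C_d : ℝ, 0 < C_d ∧ ∃ k_d : ℕ, 0 < k_d ∧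
      (∑ j ∈ Finset.range (k_d + 1), Matrix.vecMulVec (φ j) (φ j)
        - C_d • (1 : Matrix (Fin q) (Fin q) ℝ)).PosSemidef) :
    ∃ M : ℝ, 0 ≤ M ∧ ∃ lam : ℝ, lam ∈ Set.Ioo (0 : ℝ) 1 ∧
      ∀ k : ℕ, Real.sqrt ((θhat k - θ) ⬝ᵥ (θhat k - θ)) ≤ M * lam ^ k := by
  obtain ⟨B, hB⟩ := hφbdd
  obtain ⟨C_d, hCd, k_d, hkdpos, hPSD⟩ := hIE
  set K := k_d + 1 with hK
  have hdp : ∀ k, 0 ≤ φ k ⬝ᵥ φ k := fun k => auxGD_dp_self_nonneg (φ k)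
  have hden : ∀ k, 0 < γg k + φ k ⬝ᵥ φ k := fun k => by
    have h1 := hdp k; have h2 := hγg k; linarith
  have hBnn : 0 ≤ B := le_trans (Real.sqrt_nonneg _) (hB 0)
  have hB2 : ∀ k, φ k ⬝ᵥ φ k ≤ B ^ 2 := by
    intro k
    have h1 := Real.sq_sqrt (hdp k)
    have h2 := hB k
    nlinarith [Real.sqrt_nonneg (φ k ⬝ᵥ φ k)]
  -- action of A on vectors
  have hAv : ∀ k (w : Fin q → ℝ),
      A k *ᵥ w = w - ((φ k ⬝ᵥ w) / (γg k + φ k ⬝ᵥ φ k)) • φ k := by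
    intro k w
    rw [hA k, Matrix.sub_mulVec, Matrix.one_mulVec, Matrix.smul_mulVec, auxGD_vmv,
      smul_smul, div_eq_inv_mul]
  have hexp : ∀ (w u : Fin q → ℝ) (r : ℝ),
      (w - r • u) ⬝ᵥ (w - r • u) = w ⬝ᵥ w - 2 * r * (u ⬝ᵥ w) + r ^ 2 * (u ⬝ᵥ u) := by
    intro w u r
    simp only [sub_dotProduct, dotProduct_sub, smul_dotProduct, dotProduct_smul, smul_eq_mul,
      dotProduct_comm u w]
    ring
  have hcontr : ∀ k (w : Fin q → ℝ),
      (A k *ᵥ w) ⬝ᵥ (A k *ᵥ w) ≤ w ⬝ᵥ w - (φ k ⬝ᵥ w) ^ 2 / (γg k + φ k ⬝ᵥ φ k) := by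
    intro k w
    rw [hAv k w, hexp]
    have hd := hden k
    have hs := hdp k
    have hg := hγg k
    set p := φ k ⬝ᵥ w with hp
    set s := φ k ⬝ᵥ φ k with hsdef
    set dn := γg k + s with hdn
    have e1 : 2 * (p / dn) * p - (p / dn) ^ 2 * s = p ^ 2 * (2 * dn - s) / dn ^ 2 := by
      field_simp
    have e2 : p ^ 2 / dn = p ^ 2 * dn / dn ^ 2 := by
      field_simp
    have e3 : p ^ 2 * dn / dn ^ 2 ≤ p ^ 2 * (2 * dn - s) / dn ^ 2 := by
      gcongr
      nlinarith [sq_nonneg p]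
    linarith
  have hcontr' : ∀ k (w : Fin q → ℝ), (A k *ᵥ w) ⬝ᵥ (A k *ᵥ w) ≤ w ⬝ᵥ w := by
    intro k w
    have h1 := hcontr k w
    have h2 := div_nonneg (sq_nonneg (φ k ⬝ᵥ w)) (hden k).le
    linarith
  have hdiffb : ∀ k (w : Fin q → ℝ),
      (A k *ᵥ w - w) ⬝ᵥ (A k *ᵥ w - w) ≤ (φ k ⬝ᵥ w) ^ 2 / (γg k + φ k ⬝ᵥ φ k) := by
    intro k w
    rw [hAv k w]
    have hd := hden k
    have hs := hdp k
    have hg := hγg k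
    set p := φ k ⬝ᵥ w with hp
    set s := φ k ⬝ᵥ φ k with hsdef
    set dn := γg k + s with hdn
    have hv : w - (p / dn) • φ k - w = -((p / dn) • φ k) := by abel
    rw [hv]
    simp only [neg_dotProduct, dotProduct_neg, neg_neg, smul_dotProduct, dotProduct_smul,
      smul_eq_mul]
    have e1 : p / dn * (p / dn * s) = p ^ 2 * s / dn ^ 2 := by field_simp
    have e2 : p ^ 2 / dn = p ^ 2 * dn / dn ^ 2 := by field_simp
    have e3 : p ^ 2 * s / dn ^ 2 ≤ p ^ 2 * dn / dn ^ 2 := by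
      gcongr
      nlinarith [sq_nonneg p]
    linarith
  -- gradient error dynamics
  have hθerr : ∀ k, θg k - θ = Φ k *ᵥ (θg0 - θ) := by
    intro k
    induction k with
    | zero => rw [hθg0, hΦ0, Matrix.one_mulVec]
    | succ k ih =>
        rw [hθg k, hΦ k, ← Matrix.mulVec_mulVec, ← ih, hAv, hy k]
        rw [dotProduct_sub]
        have hc : (φ k ⬝ᵥ θ - φ k ⬝ᵥ θg k) / (γg k + φ k ⬝ᵥ φ k)
            = -((φ k ⬝ᵥ θg k - φ k ⬝ᵥ θ) / (γg k + φ k ⬝ᵥ φ k)) := by ring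
        rw [hc, neg_smul]
        abel
  have hDθ : ∀ k, θg k - Φ k *ᵥ θg0 = D k *ᵥ θ := by
    intro k
    have h1 := hθerr k
    rw [Matrix.mulVec_sub] at h1
    have h2 : θg k = Φ k *ᵥ θg0 - Φ k *ᵥ θ + θ := by
      rw [← h1]; abel
    rw [hD k, Matrix.sub_mulVec, Matrix.one_mulVec, h2]
    abel
  have hYθ : ∀ k, Y k = Δ k • θ := by
    intro k
    rw [hY k, hDθ k, Matrix.mulVec_mulVec, Matrix.adjugate_mul, ← hΔ k,
      Matrix.smul_mulVec, Matrix.one_mulVec]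
  have herr : ∀ k, θhat (k + 1) - θ = (γ / (γ + Δ k ^ 2)) • (θhat k - θ) := by
    intro k
    rw [hθhat k, hYθ k]
    have h1 : θhat k + (Δ k / (γ + Δ k ^ 2)) • (Δ k • θ - Δ k • θhat k) - θ
        = (1 - Δ k ^ 2 / (γ + Δ k ^ 2)) • (θhat k - θ) := by
      match_scalars <;> ring
    rw [h1]
    congr 1
    have hpos : (0:ℝ) < γ + Δ k ^ 2 := by positivity
    field_simp
    ring
  have hsq : ∀ k, (θhat (k + 1) - θ) ⬝ᵥ (θhat (k + 1) - θ)
      = (γ / (γ + Δ k ^ 2)) ^ 2 * ((θhat k - θ) ⬝ᵥ (θhat k - θ)) := by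
    intro k
    rw [herr k]
    simp only [smul_dotProduct, dotProduct_smul, smul_eq_mul]
    ring
  -- interval excitation ⇒ uniform contraction of Φ after time K
  set G : ℝ := ∑ j ∈ Finset.range K, (γg j + φ j ⬝ᵥ φ j) with hG
  have hGpos : 0 < G :=
    Finset.sum_pos (fun j _ => hden j) ⟨0, Finset.mem_range.mpr (by omega)⟩
  set Cden : ℝ := 2 * G + 2 * B ^ 2 * (K : ℝ) ^ 2 with hCden
  have hCdenpos : 0 < Cden := by positivity
  set ε : ℝ := C_d / Cden with hε
  have hεpos : 0 < ε := div_pos hCd hCdenpos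
  have hΦK : ∀ x : Fin q → ℝ, (Φ K *ᵥ x) ⬝ᵥ (Φ K *ᵥ x) ≤ (1 - ε) * (x ⬝ᵥ x) := by
    intro x
    set v : ℕ → Fin q → ℝ := fun m => Φ m *ᵥ x with hv
    have hv0 : v 0 = x := by simp only [hv, hΦ0, Matrix.one_mulVec]
    have hvs : ∀ m, v (m + 1) = A m *ᵥ v m := by
      intro m; simp only [hv]; rw [hΦ m, ← Matrix.mulVec_mulVec]
    set t : ℕ → ℝ := fun j => (φ j ⬝ᵥ v j) ^ 2 / (γg j + φ j ⬝ᵥ φ j) with ht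
    have ht0 : ∀ j, 0 ≤ t j := fun j => div_nonneg (sq_nonneg _) (hden j).le
    have htele : ∀ m, v m ⬝ᵥ v m ≤ x ⬝ᵥ x - ∑ j ∈ Finset.range m, t j := by
      intro m
      induction m with
      | zero => simp [hv0]
      | succ m ih =>
          have h1 : v (m + 1) ⬝ᵥ v (m + 1) ≤ v m ⬝ᵥ v m - t m := by
            rw [hvs m]; exact hcontr m (v m)
          rw [Finset.sum_range_succ]
          linarith
    have hstep : ∀ j, Real.sqrt ((v j - v (j + 1)) ⬝ᵥ (v j - v (j + 1))) ≤ Real.sqrt (t j) := by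
      intro j
      apply Real.sqrt_le_sqrt
      have h1 : v j - v (j + 1) = -(A j *ᵥ v j - v j) := by rw [hvs j]; abel
      rw [h1, neg_dotProduct, dotProduct_neg, neg_neg]
      exact hdiffb j (v j)
    have hdist : ∀ m, Real.sqrt ((x - v m) ⬝ᵥ (x - v m))
        ≤ ∑ j ∈ Finset.range m, Real.sqrt (t j) := by
      intro m
      have hxs : x - v m = ∑ j ∈ Finset.range m, (v j - v (j + 1)) := by
        rw [Finset.sum_range_sub' v m, hv0]
      rw [hxs]
      exact le_trans (auxGD_tri_sum m _) (Finset.sum_le_sum fun j _ => hstep j)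
    set S : ℝ := ∑ j ∈ Finset.range K, t j with hS
    have hSnn : 0 ≤ S := Finset.sum_nonneg fun j _ => ht0 j
    have hsum_sqrt : (∑ j ∈ Finset.range K, Real.sqrt (t j)) ^ 2 ≤ (K : ℝ) * S := by
      calc (∑ j ∈ Finset.range K, Real.sqrt (t j)) ^ 2
          ≤ (Finset.range K).card * ∑ j ∈ Finset.range K, Real.sqrt (t j) ^ 2 :=
            sq_sum_le_card_mul_sum_sq
        _ = (K : ℝ) * S := by
            rw [Finset.card_range, hS]
            congr 1
            exact Finset.sum_congr rfl fun j _ => Real.sq_sqrt (ht0 j)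
    -- interval excitation at x
    have hIEx : C_d * (x ⬝ᵥ x) ≤ ∑ j ∈ Finset.range K, (φ j ⬝ᵥ x) ^ 2 := by
      have h0 := hPSD.dotProduct_mulVec_nonneg x
      rw [star_trivial, Matrix.sub_mulVec, Matrix.smul_mulVec, Matrix.one_mulVec,
        auxGD_sum_mulVec, dotProduct_sub, auxGD_dp_sum, dotProduct_smul] at h0
      have h1 : ∀ j, x ⬝ᵥ (Matrix.vecMulVec (φ j) (φ j) *ᵥ x) = (φ j ⬝ᵥ x) ^ 2 := by
        intro j
        rw [auxGD_vmv, dotProduct_smul, smul_eq_mul, dotProduct_comm x (φ j), sq]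
      rw [Finset.sum_congr rfl fun j _ => h1 j] at h0
      simp only [smul_eq_mul] at h0
      linarith
    have hdnG : ∀ j, j ∈ Finset.range K → γg j + φ j ⬝ᵥ φ j ≤ G := by
      intro j hj
      exact Finset.single_le_sum (fun i _ => (hden i).le) hj
    have hptbound : ∀ j ∈ Finset.range K,
        (φ j ⬝ᵥ x) ^ 2 ≤ 2 * (G * t j) + 2 * (B ^ 2 * ((K : ℝ) * S)) := by
      intro j hj
      have hab : φ j ⬝ᵥ x = (φ j ⬝ᵥ v j) + (φ j ⬝ᵥ (x - v j)) := by
        rw [dotProduct_sub]; ring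
      have ha2 : (φ j ⬝ᵥ v j) ^ 2 = (γg j + φ j ⬝ᵥ φ j) * t j := by
        simp only [ht]
        rw [mul_comm]
        exact (div_mul_cancel₀ _ (hden j).ne').symm
      have ha2' : (φ j ⬝ᵥ v j) ^ 2 ≤ G * t j := by
        rw [ha2]
        exact mul_le_mul_of_nonneg_right (hdnG j hj) (ht0 j)
      have hb2 : (φ j ⬝ᵥ (x - v j)) ^ 2 ≤ B ^ 2 * ((K : ℝ) * S) := by
        have h1 : (φ j ⬝ᵥ (x - v j)) ^ 2 ≤ (φ j ⬝ᵥ φ j) * ((x - v j) ⬝ᵥ (x - v j)) :=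
          auxGD_cs _ _
        have h2 : (x - v j) ⬝ᵥ (x - v j) ≤ (K : ℝ) * S := by
          have h3 := hdist j
          have h4 : ∑ i ∈ Finset.range j, Real.sqrt (t i)
              ≤ ∑ i ∈ Finset.range K, Real.sqrt (t i) :=
            Finset.sum_le_sum_of_subset_of_nonneg
              (Finset.range_subset_range.mpr (le_of_lt (Finset.mem_range.mp hj)))
              (fun i _ _ => Real.sqrt_nonneg _)
          have h6 := Real.sq_sqrt (auxGD_dp_self_nonneg (x - v j))
          have h5 := le_trans h3 h4
          calc (x - v j) ⬝ᵥ (x - v j)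
              = Real.sqrt ((x - v j) ⬝ᵥ (x - v j)) ^ 2 := h6.symm
            _ ≤ (∑ i ∈ Finset.range K, Real.sqrt (t i)) ^ 2 := by
                have hm := mul_self_le_mul_self (Real.sqrt_nonneg ((x - v j) ⬝ᵥ (x - v j))) h5
                simpa [pow_two] using hm
            _ ≤ (K : ℝ) * S := hsum_sqrt
        have hφφ := hB2 j
        have hxvnn := auxGD_dp_self_nonneg (x - v j)
        calc (φ j ⬝ᵥ (x - v j)) ^ 2 ≤ (φ j ⬝ᵥ φ j) * ((x - v j) ⬝ᵥ (x - v j)) := h1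
          _ ≤ B ^ 2 * ((K : ℝ) * S) := mul_le_mul hφφ h2 hxvnn (sq_nonneg B)
      have hab2 : (φ j ⬝ᵥ x) ^ 2 = ((φ j ⬝ᵥ v j) + (φ j ⬝ᵥ (x - v j))) ^ 2 := by rw [hab]
      nlinarith [sq_nonneg ((φ j ⬝ᵥ v j) - (φ j ⬝ᵥ (x - v j))), hab2, ha2', hb2]
    have hsumbound : ∑ j ∈ Finset.range K, (φ j ⬝ᵥ x) ^ 2
        ≤ 2 * G * S + 2 * B ^ 2 * (K : ℝ) ^ 2 * S := by
      calc ∑ j ∈ Finset.range K, (φ j ⬝ᵥ x) ^ 2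
          ≤ ∑ j ∈ Finset.range K, (2 * (G * t j) + 2 * (B ^ 2 * ((K : ℝ) * S))) :=
            Finset.sum_le_sum hptbound
        _ = 2 * G * S + 2 * B ^ 2 * (K : ℝ) ^ 2 * S := by
            rw [Finset.sum_add_distrib, Finset.sum_const, Finset.card_range, nsmul_eq_mul]
            have h1 : ∑ j ∈ Finset.range K, 2 * (G * t j) = 2 * G * S := by
              rw [hS, Finset.mul_sum]
              exact Finset.sum_congr rfl fun j _ => by ring
            rw [h1]
            ring
    have hfin : C_d * (x ⬝ᵥ x) ≤ Cden * S := by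
      have h1 : Cden * S = 2 * G * S + 2 * B ^ 2 * (K : ℝ) ^ 2 * S := by rw [hCden]; ring
      linarith
    have hSge : ε * (x ⬝ᵥ x) ≤ S := by
      rw [hε, div_mul_eq_mul_div, div_le_iff₀ hCdenpos]
      linarith [hfin]
    have hΦKv : Φ K *ᵥ x = v K := rfl
    calc (Φ K *ᵥ x) ⬝ᵥ (Φ K *ᵥ x) = v K ⬝ᵥ v K := by rw [hΦKv]
      _ ≤ x ⬝ᵥ x - S := htele K
      _ ≤ x ⬝ᵥ x - ε * (x ⬝ᵥ x) := by linarith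
      _ = (1 - ε) * (x ⬝ᵥ x) := by ring
  have hΦk : ∀ k, K ≤ k → ∀ x : Fin q → ℝ,
      (Φ k *ᵥ x) ⬝ᵥ (Φ k *ᵥ x) ≤ (1 - ε) * (x ⬝ᵥ x) := by
    intro k hk
    induction k, hk using Nat.le_induction with
    | base => exact hΦK
    | succ k hk ih =>
        intro x
        rw [hΦ k, ← Matrix.mulVec_mulVec]
        exact le_trans (hcontr' k _) (ih x)
  have hε1 : ε ≤ 1 := by
    by_contra hcon
    push_neg at hcon
    set x0 : Fin q → ℝ := Pi.single ⟨0, hq⟩ 1 with hx0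
    have hxx : x0 ⬝ᵥ x0 = 1 := by
      simp [hx0, dotProduct, Pi.single_apply]
    have hx := hΦK x0
    rw [hxx] at hx
    nlinarith [auxGD_dp_self_nonneg (Φ K *ᵥ x0)]
  set ρ : ℝ := Real.sqrt (1 - ε) with hρ
  have hρnn : 0 ≤ ρ := Real.sqrt_nonneg _
  have hρlt : ρ < 1 := by
    rw [hρ]
    have : Real.sqrt (1 - ε) < Real.sqrt 1 := Real.sqrt_lt_sqrt (by linarith) (by linarith)
    simpa using this
  have hDlow : ∀ k, K ≤ k → ∀ x : Fin q → ℝ,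
      (1 - ρ) ^ 2 * (x ⬝ᵥ x) ≤ x ⬝ᵥ (((D k)ᵀ * D k) *ᵥ x) := by
    intro k hk x
    have h1 : x ⬝ᵥ (((D k)ᵀ * D k) *ᵥ x) = (D k *ᵥ x) ⬝ᵥ (D k *ᵥ x) := by
      rw [← Matrix.mulVec_mulVec, Matrix.dotProduct_mulVec, Matrix.vecMul_transpose]
    rw [h1]
    have hΦx := hΦk k hk x
    have ha2 : Real.sqrt (x ⬝ᵥ x) ^ 2 = x ⬝ᵥ x := Real.sq_sqrt (auxGD_dp_self_nonneg x)
    have hb2 : Real.sqrt ((Φ k *ᵥ x) ⬝ᵥ (Φ k *ᵥ x)) ^ 2 = (Φ k *ᵥ x) ⬝ᵥ (Φ k *ᵥ x) :=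
      Real.sq_sqrt (auxGD_dp_self_nonneg _)
    have hρ2 : ρ ^ 2 = 1 - ε := Real.sq_sqrt (by linarith)
    set a := Real.sqrt (x ⬝ᵥ x) with had
    set b := Real.sqrt ((Φ k *ᵥ x) ⬝ᵥ (Φ k *ᵥ x)) with hbd
    have hann : 0 ≤ a := Real.sqrt_nonneg _
    have hbnn : 0 ≤ b := Real.sqrt_nonneg _
    have hbρa : b ≤ ρ * a := by
      have h2 : b ^ 2 ≤ (ρ * a) ^ 2 := by
        rw [hb2, mul_pow, hρ2, ha2]
        exact hΦx
      nlinarith [mul_nonneg hρnn hann]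
    have htri : a ≤ Real.sqrt ((D k *ᵥ x) ⬝ᵥ (D k *ᵥ x)) + b := by
      have hxd : x = (D k *ᵥ x) + (Φ k *ᵥ x) := by
        rw [hD k, Matrix.sub_mulVec, Matrix.one_mulVec]; abel
      calc a = Real.sqrt (((D k *ᵥ x) + (Φ k *ᵥ x)) ⬝ᵥ ((D k *ᵥ x) + (Φ k *ᵥ x))) := by
            rw [had]; rw [← hxd]
        _ ≤ Real.sqrt ((D k *ᵥ x) ⬝ᵥ (D k *ᵥ x)) + b := by rw [hbd]; exact auxGD_tri _ _
    have hc := Real.sq_sqrt (auxGD_dp_self_nonneg (D k *ᵥ x))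
    have h7 : (1 - ρ) * a ≤ Real.sqrt ((D k *ᵥ x) ⬝ᵥ (D k *ᵥ x)) := by nlinarith
    have h8 : 0 ≤ (1 - ρ) * a := mul_nonneg (by linarith) hann
    nlinarith [mul_self_le_mul_self h8 h7]
  set δ : ℝ := ((1 - ρ) ^ 2) ^ q with hδ
  have hδpos : 0 < δ := by
    rw [hδ]
    apply pow_pos
    nlinarith
  have hDet : ∀ k, K ≤ k → δ ≤ Δ k ^ 2 := by
    intro k hk
    have hherm : ((D k)ᵀ * D k).IsHermitian := by
      ext i j
      simp [Matrix.conjTranspose_apply, Matrix.mul_apply, Matrix.transpose_apply, mul_comm]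
    have h := auxGD_det_ge _ hherm ((1 - ρ) ^ 2) (sq_nonneg _) (hDlow k hk)
    rwa [Matrix.det_mul, Matrix.det_transpose, ← sq, ← hΔ k, ← hδ] at h
  -- final assembly
  set lam : ℝ := γ / (γ + δ) with hlam
  have hlam0 : 0 < lam := div_pos hγ (by positivity)
  have hlam1 : lam < 1 := by
    rw [hlam, div_lt_one (by positivity)]
    linarith
  have hck1 : ∀ k, γ / (γ + Δ k ^ 2) ≤ 1 := by
    intro k
    rw [div_le_one (by positivity)]
    nlinarith [sq_nonneg (Δ k)]
  have hck0 : ∀ k, 0 < γ / (γ + Δ k ^ 2) := fun k => div_pos hγ (by positivity)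
  have hckK : ∀ k, K ≤ k → γ / (γ + Δ k ^ 2) ≤ lam := by
    intro k hk
    rw [hlam]
    apply div_le_div_of_nonneg_left hγ.le (by positivity)
    linarith [hDet k hk]
  set n2 : ℕ → ℝ := fun k => (θhat k - θ) ⬝ᵥ (θhat k - θ) with hn2
  have hn2nn : ∀ k, 0 ≤ n2 k := fun k => auxGD_dp_self_nonneg _
  have hmono : ∀ k, n2 (k + 1) ≤ n2 k := by
    intro k
    have h1 : n2 (k + 1) = (γ / (γ + Δ k ^ 2)) ^ 2 * n2 k := hsq k
    have hc2 : (γ / (γ + Δ k ^ 2)) ^ 2 ≤ 1 := by nlinarith [hck1 k, hck0 k]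
    nlinarith [h1, hc2, hn2nn k]
  have hmono0 : ∀ k, n2 k ≤ n2 0 := by
    intro k
    induction k with
    | zero => exact le_refl _
    | succ k ih => exact le_trans (hmono k) ih
  have hgeo : ∀ k, K ≤ k → n2 k ≤ lam ^ (2 * (k - K)) * n2 K := by
    intro k hk
    induction k, hk using Nat.le_induction with
    | base => simp
    | succ k hk ih =>
        have h1 : n2 (k + 1) = (γ / (γ + Δ k ^ 2)) ^ 2 * n2 k := hsq k
        have h2 : (γ / (γ + Δ k ^ 2)) ^ 2 ≤ lam ^ 2 := by
          nlinarith [hckK k hk, hck0 k]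
        have h3 : 2 * (k + 1 - K) = 2 * (k - K) + 2 := by omega
        rw [h3, pow_add]
        calc n2 (k + 1) = (γ / (γ + Δ k ^ 2)) ^ 2 * n2 k := h1
          _ ≤ lam ^ 2 * n2 k := mul_le_mul_of_nonneg_right h2 (hn2nn k)
          _ ≤ lam ^ 2 * (lam ^ (2 * (k - K)) * n2 K) :=
              mul_le_mul_of_nonneg_left ih (by positivity)
          _ = lam ^ (2 * (k - K)) * lam ^ 2 * n2 K := by ring
  have hM2nn : (0:ℝ) ≤ n2 0 / lam ^ (2 * K) := div_nonneg (hn2nn 0) (by positivity)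
  refine ⟨Real.sqrt (n2 0 / lam ^ (2 * K)), Real.sqrt_nonneg _, lam, ⟨hlam0, hlam1⟩, ?_⟩
  intro k
  have hbound : n2 k ≤ (n2 0 / lam ^ (2 * K)) * lam ^ (2 * k) := by
    rcases le_or_gt K k with hk | hk
    · have hsplit : lam ^ (2 * k) = lam ^ (2 * K) * lam ^ (2 * (k - K)) := by
        rw [← pow_add]; congr 1; omega
      calc n2 k ≤ lam ^ (2 * (k - K)) * n2 K := hgeo k hk
        _ ≤ lam ^ (2 * (k - K)) * n2 0 := mul_le_mul_of_nonneg_left (hmono0 K) (by positivity)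
        _ = (n2 0 / lam ^ (2 * K)) * lam ^ (2 * k) := by
            rw [hsplit]
            field_simp
    · calc n2 k ≤ n2 0 := hmono0 k
        _ = (n2 0 / lam ^ (2 * K)) * lam ^ (2 * K) := by field_simp
        _ ≤ (n2 0 / lam ^ (2 * K)) * lam ^ (2 * k) :=
            mul_le_mul_of_nonneg_left
              (pow_le_pow_of_le_one hlam0.le hlam1.le (by omega)) hM2nn
  have hfinal := Real.sqrt_le_sqrt hbound
  have heq : Real.sqrt ((n2 0 / lam ^ (2 * K)) * lam ^ (2 * k))
      = Real.sqrt (n2 0 / lam ^ (2 * K)) * lam ^ k := by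
    rw [Real.sqrt_mul hM2nn, show lam ^ (2 * k) = (lam ^ k) ^ 2 by
        rw [← pow_mul, mul_comm],
      Real.sqrt_sq (pow_nonneg hlam0.le k)]
  calc Real.sqrt ((θhat k - θ) ⬝ᵥ (θhat k - θ)) = Real.sqrt (n2 k) := rfl
    _ ≤ Real.sqrt ((n2 0 / lam ^ (2 * K)) * lam ^ (2 * k)) := hfinal
    _ = Real.sqrt (n2 0 / lam ^ (2 * K)) * lam ^ k := heq
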